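/- For a, b ∈ ℂ, the formal Laurent series F(t) = D_{a,b}(t)/t satisfies F(t) + F(−t) = 2b and the Riccati equation F′(t) = −F(t)² + 2b·F(t) + (a² − b²), where F(−t) denotes the Laurent series whose coefficient of t^k is (−1)^k times that of F, and F′ is the termwise derivative. -/

import Mathlib

noncomputable section

namespace RigidGenus

variable {R : Type*} [Field R]

/-- Termwise substitution `t ↦ w·t` on Laurent series: the coefficient of `t^k`
is multiplied by `w^k`. -/
def zscale (w : R) (f : LaurentSeries R) : LaurentSeries R where
  coeff k := w ^ k * f.coeff k
  isPWO_support' := f.isPWO_support'.mono (fun k hk => by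
    simp only [Function.mem_support, ne_eq] at hk ⊢
    exact fun h => hk (by rw [h, mul_zero]))

/-- Termwise derivative of a Laurent series: `(∑ f_k t^k)' = ∑ k f_k t^(k-1)`. -/
def lderiv (f : LaurentSeries R) : LaurentSeries R where
  coeff k := ((k + 1 : ℤ) : R) * f.coeff (k + 1)
  isPWO_support' := by
    have himg : ((fun k : ℤ => k - 1) '' (Function.support f.coeff)).IsPWO :=
      f.isPWO_support'.image_of_monotone (fun a b h => sub_le_sub_right h 1)
    refine himg.mono (fun k hk => ?_)
    simp only [Function.mem_support, ne_eq] at hk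
    exact ⟨k + 1, fun h => hk (by rw [h, mul_zero]), by ring⟩

/-- `F_H = H(t)/t`, as a formal Laurent series. -/
def FH (H : PowerSeries R) : LaurentSeries R :=
  HahnSeries.single (-1 : ℤ) (1 : R) * HahnSeries.ofPowerSeries ℤ R H

/-- `S_H(w_0,…,w_n;t) = ∑_i ∏_{j ≠ i} F_H((w_j - w_i) t)`. -/
def SH (H : PowerSeries R) {n : ℕ} (w : Fin (n + 1) → ℤ) : LaurentSeries R :=
  ∑ i : Fin (n + 1), ∏ j ∈ Finset.univ.erase i, zscale ((w j - w i : ℤ) : R) (FH H)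

/-- `H` is `n`-algebraically rigid: for all `1 ≤ m ≤ n` and pairwise distinct
integers `w_0, …, w_m`, the Laurent series `S_H(w_0,…,w_m;t)` is constant. -/
def AlgRigid (H : PowerSeries R) (n : ℕ) : Prop :=
  ∀ m : ℕ, 1 ≤ m → m ≤ n → ∀ w : Fin (m + 1) → ℤ, Function.Injective w →
    ∀ k : ℤ, k ≠ 0 → (SH H w).coeff k = 0

/-- The formal exponential series `exp (a t)`. -/
def expS (a : R) : PowerSeries R := PowerSeries.mk fun n => a ^ n / n.factorial

/-- The formal sine series `sin (a t)`. -/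
def sinS (a : R) : PowerSeries R :=
  PowerSeries.mk fun n => if n % 2 = 1 then (-1 : R) ^ (n / 2) * a ^ n / n.factorial else 0

/-- The formal cosine series `cos (a t)`. -/
def cosS (a : R) : PowerSeries R :=
  PowerSeries.mk fun n => if n % 2 = 0 then (-1 : R) ^ (n / 2) * a ^ n / n.factorial else 0

/-- `H = D_{a,b}`, the generalized Todd series `t(a·coth(at)+b)`: for `a ≠ 0` it is
characterized by `D_{a,b}(t)·(e^{at} - e^{-at}) = t·(a(e^{at}+e^{-at}) + b(e^{at}-e^{-at}))`,
and `D_{0,b}(t) = 1 + bt`. -/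
def IsDab (a b : R) (H : PowerSeries R) : Prop :=
  (a ≠ 0 ∧ H * (expS a - expS (-a)) =
      PowerSeries.X * (PowerSeries.C a * (expS a + expS (-a)) +
        PowerSeries.C b * (expS a - expS (-a)))) ∨
  (a = 0 ∧ H = 1 + PowerSeries.C b * PowerSeries.X)

/-- `H = G_{a,b}`, the series `t(a·cot(at)+b)`: for `a ≠ 0` it is characterized by
`G_{a,b}(t)·sin(at) = t·(a·cos(at) + b·sin(at))`, and `G_{0,b}(t) = 1 + bt`. -/
def IsGab (a b : R) (H : PowerSeries R) : Prop :=
  (a ≠ 0 ∧ H * sinS a =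
      PowerSeries.X * (PowerSeries.C a * cosS a + PowerSeries.C b * sinS a)) ∨
  (a = 0 ∧ H = 1 + PowerSeries.C b * PowerSeries.X)


section Aux

open PowerSeries

lemma expS_eq (a : ℂ) : expS a = rescale a (PowerSeries.exp ℂ) := by
  ext n
  simp [expS, coeff_rescale, div_eq_mul_inv]

lemma derivative_expS (a : ℂ) : d⁄dX ℂ (expS a) = C a * expS a := by
  ext n
  rw [coeff_derivative, coeff_C_mul]
  simp only [expS, coeff_mk, Nat.factorial_succ, Nat.cast_mul, Nat.cast_add, Nat.cast_one]
  have h1 : ((n : ℂ) + 1) ≠ 0 := Nat.cast_add_one_ne_zero n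
  have h2 : ((n.factorial : ℕ) : ℂ) ≠ 0 := by exact_mod_cast n.factorial_ne_zero
  field_simp
  ring

lemma rescale_neg_one_expS (a : ℂ) : rescale (-1 : ℂ) (expS a) = expS (-a) := by
  ext n
  rw [coeff_rescale]
  simp [expS, neg_pow a n]
  ring

lemma expS_sub_ne (a : ℂ) (ha : a ≠ 0) : expS a - expS (-a) ≠ 0 := by
  intro h
  have := congrArg (coeff 1) h
  simp [expS] at this
  exact ha this

lemma rescale_C' (w c : ℂ) : rescale w (C c) = C c := by
  ext n
  simp only [coeff_rescale, coeff_C]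
  split <;> simp_all

lemma dmul (f g : PowerSeries ℂ) :
    d⁄dX ℂ (f * g) = f * d⁄dX ℂ g + g * d⁄dX ℂ f := by
  simpa [smul_eq_mul] using Derivation.leibniz (d⁄dX ℂ) f g

lemma C2b (b : ℂ) : C (2 * b) = 2 * C b := by
  rw [map_mul, map_ofNat]

lemma P1 (a b : ℂ) (D : PowerSeries ℂ)
    (h : D * (expS a - expS (-a)) =
      PowerSeries.X * (C a * (expS a + expS (-a)) + C b * (expS a - expS (-a)))) (ha : a ≠ 0) :
    D - rescale (-1 : ℂ) D = C (2 * b) * X := by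
  have hm := congrArg (rescale (-1 : ℂ)) h
  simp only [map_mul, map_add, map_sub, rescale_neg_one_expS, rescale_C', rescale_X, neg_neg,
    map_neg, map_one] at hm
  apply mul_right_cancel₀ (expS_sub_ne a ha)
  rw [C2b]
  linear_combination h + hm

lemma P2 (a b : ℂ) (D : PowerSeries ℂ)
    (h : D * (expS a - expS (-a)) =
      PowerSeries.X * (C a * (expS a + expS (-a)) + C b * (expS a - expS (-a)))) (ha : a ≠ 0) :
    X * d⁄dX ℂ D = D - D ^ 2 + C (2 * b) * X * D + C (a ^ 2 - b ^ 2) * X ^ 2 := by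
  have hd := congrArg (d⁄dX ℂ) h
  simp only [dmul, map_add, map_sub, derivative_expS, derivative_C, derivative_X, map_neg] at hd
  rw [C2b, show C (a ^ 2 - b ^ 2) = C a ^ 2 - C b ^ 2 by rw [map_sub, map_pow, map_pow]]
  apply mul_right_cancel₀ (pow_ne_zero 2 (expS_sub_ne a ha))
  linear_combination (X * (expS a - expS (-a))) * hd +
    (D * (expS a - expS (-a)) + X * (C a * (expS a + expS (-a)) + C b * (expS a - expS (-a)))
      - (expS a - expS (-a)) - 2 * C b * X * (expS a - expS (-a))
      - C a * X * (expS a + expS (-a))) * h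

lemma coeff_ofPS (g : PowerSeries ℂ) (k : ℤ) :
    (HahnSeries.ofPowerSeries ℤ ℂ g).coeff k
      = if 0 ≤ k then PowerSeries.coeff k.toNat g else 0 := by
  split_ifs with h
  · obtain ⟨n, rfl⟩ := Int.eq_ofNat_of_zero_le h
    rw [HahnSeries.ofPowerSeries_apply_coeff]
    simp
  · rw [HahnSeries.ofPowerSeries_apply]
    apply HahnSeries.embDomain_notin_range
    rintro ⟨n, hn⟩
    have hn' : (n : ℤ) = k := hn
    omega

lemma singleInt_mul_coeff (c : ℤ) (f : LaurentSeries ℂ) (k : ℤ) :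
    (HahnSeries.single c (1 : ℂ) * f).coeff k = f.coeff (k - c) := by
  have := HahnSeries.coeff_single_mul_add (r := (1 : ℂ)) (x := f) (a := k - c) (b := c)
  simpa using this

lemma zscale_coeff (w : ℂ) (f : LaurentSeries ℂ) (k : ℤ) :
    (zscale w f).coeff k = w ^ k * f.coeff k := rfl

lemma lderiv_coeff (f : LaurentSeries ℂ) (k : ℤ) :
    (lderiv f).coeff k = ((k + 1 : ℤ) : ℂ) * f.coeff (k + 1) := rfl

lemma FH_coeff (g : PowerSeries ℂ) (k : ℤ) :
    (FH g).coeff k = (HahnSeries.ofPowerSeries ℤ ℂ g).coeff (k + 1) := by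
  rw [FH, singleInt_mul_coeff]
  norm_num

lemma lderiv_FH (g : PowerSeries ℂ) :
    lderiv (FH g)
      = HahnSeries.single (-1 : ℤ) (1 : ℂ) * HahnSeries.ofPowerSeries ℤ ℂ (d⁄dX ℂ g)
        - HahnSeries.single (-2 : ℤ) (1 : ℂ) * HahnSeries.ofPowerSeries ℤ ℂ g := by
  ext k
  rw [HahnSeries.coeff_sub, lderiv_coeff, FH_coeff, singleInt_mul_coeff, singleInt_mul_coeff,
    coeff_ofPS, coeff_ofPS, coeff_ofPS,
    show k + 1 + 1 = k + 2 by ring, show k - -1 = k + 1 by ring, show k - -2 = k + 2 by ring]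
  by_cases h1 : 0 ≤ k + 1
  · have h2 : 0 ≤ k + 2 := by omega
    obtain ⟨n, hn⟩ : ∃ n : ℕ, k + 1 = (n : ℤ) := ⟨(k + 1).toNat, by omega⟩
    rw [if_pos h1, if_pos h2, coeff_derivative,
      show (k + 1).toNat = n by omega, show (k + 2).toNat = n + 1 by omega, hn]
    push_cast
    ring
  · by_cases h2 : 0 ≤ k + 2
    · rw [if_neg h1, if_pos h2, show (k + 2).toNat = 0 by omega,
        show ((k + 1 : ℤ) : ℂ) = -1 by rw [show k + 1 = -1 by omega]; norm_num]
      ring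
    · rw [if_neg h1, if_neg h2]
      ring

lemma zscale_neg_FH (g : PowerSeries ℂ) :
    zscale (-1 : ℂ) (FH g)
      = -(HahnSeries.single (-1 : ℤ) (1 : ℂ)
          * HahnSeries.ofPowerSeries ℤ ℂ (rescale (-1 : ℂ) g)) := by
  ext k
  rw [HahnSeries.coeff_neg, zscale_coeff, FH_coeff, singleInt_mul_coeff, coeff_ofPS, coeff_ofPS,
    show k - -1 = k + 1 by ring]
  by_cases h1 : 0 ≤ k + 1
  · simp only [if_pos h1]
    rw [coeff_rescale]
    have hz : ((-1 : ℂ)) ^ k * (-1) = (-1) ^ (k + 1) := (zpow_add_one₀ (by norm_num) k).symm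
    have e2 : ((-1 : ℂ)) ^ (k + 1) = (-1) ^ ((k + 1).toNat) := by
      rw [← zpow_natCast, Int.toNat_of_nonneg h1]
    have e3 : ((-1 : ℂ)) ^ k = -(-1 : ℂ) ^ ((k + 1).toNat) := by
      rw [← e2, ← hz]; ring
    rw [e3]
    ring
  · simp only [if_neg h1]
    ring

end Aux

/-- for `a, b ∈ ℂ`, the Laurent series `F(t) = D_{a,b}(t)/t` satisfies
`F(t) + F(−t) = 2b` and the Riccati equation `F′ = −F² + 2b·F + (a² − b²)`. -/
theorem Dab_div_t_properties (a b : ℂ) (D : PowerSeries ℂ) (hD : IsDab a b D) :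
    FH D + zscale (-1 : ℂ) (FH D) = (HahnSeries.C (2 * b) : LaurentSeries ℂ) ∧
      lderiv (FH D)
        = -(FH D ^ 2) + (HahnSeries.C (2 * b) : LaurentSeries ℂ) * FH D
          + (HahnSeries.C (a ^ 2 - b ^ 2) : LaurentSeries ℂ) := by
  have hP1 : D - PowerSeries.rescale (-1 : ℂ) D
      = PowerSeries.C (2 * b) * PowerSeries.X := by
    rcases hD with ⟨ha, hrel⟩ | ⟨ha, hrel⟩
    · exact P1 a b D hrel ha
    · rw [hrel, C2b, map_add, map_one, map_mul, rescale_C', PowerSeries.rescale_X]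
      have : PowerSeries.C (-1 : ℂ) = -1 := by simp
      rw [this]
      ring
  have hP2 : PowerSeries.X * PowerSeries.derivative ℂ D
      = D - D ^ 2 + PowerSeries.C (2 * b) * PowerSeries.X * D
        + PowerSeries.C (a ^ 2 - b ^ 2) * PowerSeries.X ^ 2 := by
    rcases hD with ⟨ha, hrel⟩ | ⟨ha, hrel⟩
    · exact P2 a b D hrel ha
    · subst ha
      have hd : PowerSeries.derivative ℂ (1 + PowerSeries.C b * PowerSeries.X)
          = PowerSeries.C b := by
        rw [map_add, dmul, PowerSeries.derivative_C, PowerSeries.derivative_X,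
          Derivation.map_one_eq_zero]
        ring
      rw [hrel, hd, C2b, show PowerSeries.C ((0 : ℂ) ^ 2 - b ^ 2)
          = -(PowerSeries.C b) ^ 2 by rw [map_sub, map_pow, map_pow, map_zero]; ring]
      ring
  have h1 : (HahnSeries.single (-1 : ℤ) (1 : ℂ) : LaurentSeries ℂ)
      * HahnSeries.single (1 : ℤ) (1 : ℂ) = 1 := by
    rw [HahnSeries.single_mul_single]
    norm_num
  have h2 : (HahnSeries.single (-2 : ℤ) (1 : ℂ) : LaurentSeries ℂ)
      = HahnSeries.single (-1 : ℤ) (1 : ℂ) * HahnSeries.single (-1 : ℤ) (1 : ℂ) := by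
    rw [HahnSeries.single_mul_single]
    norm_num
  have hFH : FH D = HahnSeries.single (-1 : ℤ) (1 : ℂ) * HahnSeries.ofPowerSeries ℤ ℂ D := rfl
  constructor
  · have key := congrArg (HahnSeries.ofPowerSeries ℤ ℂ) hP1
    rw [map_sub, map_mul, HahnSeries.ofPowerSeries_C, HahnSeries.ofPowerSeries_X] at key
    rw [zscale_neg_FH, hFH]
    linear_combination (HahnSeries.single (-1 : ℤ) (1 : ℂ) : LaurentSeries ℂ) * key
      + (HahnSeries.C (2 * b) : LaurentSeries ℂ) * h1
  · have key := congrArg (HahnSeries.ofPowerSeries ℤ ℂ) hP2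
    rw [lderiv_FH, hFH, h2]
    simp only [map_mul, map_sub, map_add, map_pow, map_ofNat, HahnSeries.ofPowerSeries_C,
      HahnSeries.ofPowerSeries_X] at key ⊢
    linear_combination (HahnSeries.single (-1 : ℤ) (1 : ℂ) : LaurentSeries ℂ) ^ 2 * key +
      (-(HahnSeries.single (-1 : ℤ) (1 : ℂ)
          * HahnSeries.ofPowerSeries ℤ ℂ (PowerSeries.derivative ℂ D))
        + 2 * (HahnSeries.C b : LaurentSeries ℂ)
          * (HahnSeries.single (-1 : ℤ) (1 : ℂ) * HahnSeries.ofPowerSeries ℤ ℂ D)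
        + ((HahnSeries.C a : LaurentSeries ℂ) ^ 2 - (HahnSeries.C b : LaurentSeries ℂ) ^ 2)
          * (HahnSeries.single (-1 : ℤ) (1 : ℂ) * HahnSeries.single (1 : ℤ) (1 : ℂ) + 1)) * h1

end RigidGenus
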